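/- For n ≥ 5, let P_1 = (1 2)(2 3)···(n-1, n) in S_n. If E is a product of k distinct transpositions in S_n, each distinct from all factors (i, i+1) of P_1, and E · P_1 equals the identity, then k ≥ n + 1. -/

import Mathlib

private lemma qval (m : ℕ) : ∀ x : ℕ,
    (((List.range m).map fun i => Equiv.swap (i + 1) (i + 2)).prod) x
      = if x = m + 1 then 1 else if 1 ≤ x ∧ x ≤ m then x + 1 else x := by
  induction m with
  | zero =>
    intro x
    simp only [List.range_zero, List.map_nil, List.prod_nil, Equiv.Perm.one_apply]
    split_ifs with h1 h2 <;> omega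
  | succ m ih =>
    intro x
    rw [List.range_succ, List.map_append, List.prod_append]
    simp only [List.map_cons, List.map_nil, List.prod_cons, List.prod_nil, mul_one,
      Equiv.Perm.mul_apply]
    rw [Equiv.swap_apply_def]
    split_ifs with h1 h2 <;> rw [ih] <;> split_ifs <;> omega

private lemma prodMem (V : Finset ℕ) : ∀ (l : List (ℕ × ℕ)), (∀ p ∈ l, p.1 ∈ V ∧ p.2 ∈ V) →
    ∀ x : ℕ, ((l.map fun p => Equiv.swap p.1 p.2).prod x ∈ V ↔ x ∈ V)
  | [], _, x => by simp
  | p :: t, h, x => by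
    have hp := h p (List.mem_cons_self)
    have iht := prodMem V t (fun q hq => h q (List.mem_cons_of_mem _ hq)) x
    simp only [List.map_cons, List.prod_cons, Equiv.Perm.mul_apply]
    rw [← iht]
    rw [Equiv.swap_apply_def]
    split_ifs with h1 h2
    · exact iff_of_true hp.2 (h1 ▸ hp.1)
    · exact iff_of_true hp.1 (h2 ▸ hp.2)
    · exact Iff.rfl

private lemma perm_inv_apply_self (e : Equiv.Perm ℕ) (x : ℕ) : e⁻¹ (e x) = x :=
  Equiv.Perm.inv_eq_iff_eq.mpr rfl

private lemma perm_apply_inv_self (e : Equiv.Perm ℕ) (x : ℕ) : e (e⁻¹ x) = x :=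
  (Equiv.eq_symm_apply e).mp rfl

private lemma via_swap {N : ℕ} (a b : Fin N) :
    Equiv.Perm.viaEmbeddingHom Fin.valEmbedding (Equiv.swap a b) = Equiv.swap (a : ℕ) (b : ℕ) := by
  rw [Equiv.Perm.viaEmbeddingHom_apply]
  ext z
  by_cases hz : z ∈ Set.range (Fin.valEmbedding (n := N))
  · obtain ⟨w, rfl⟩ := hz
    rw [Equiv.Perm.viaEmbedding_apply]
    simp only [Fin.valEmbedding_apply]
    exact (Fin.val_injective.swap_apply a b w).symm
  · have h1 : z ≠ (a : ℕ) := fun h => hz ⟨a, h.symm⟩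
    have h2 : z ≠ (b : ℕ) := fun h => hz ⟨b, h.symm⟩
    rw [Equiv.Perm.viaEmbedding_apply_of_notMem _ _ _ hz, Equiv.swap_apply_of_ne_of_ne h1 h2]

open Fin.NatCast in
/-- Theorem 2 (optimality part): for `n ≥ 5` and
`P₁ = (1 2)(2 3)⋯(n-1, n)` in `S_n`, any product `E` of `k` distinct
transpositions of `S_n`, each distinct from all factors `(i, i+1)` of `P₁`,
with `E · P₁ = 1`, has `k ≥ n + 1`. -/
theorem stmt10 (n k : ℕ) (hn : 5 ≤ n) (L : List (ℕ × ℕ))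
    (hL : ∀ p ∈ L, p.1 ≠ p.2 ∧ p.1 ∈ Finset.Icc 1 n ∧ p.2 ∈ Finset.Icc 1 n)
    (hdistinct : (L.map fun p => Equiv.swap p.1 p.2).Nodup)
    (havoid : ∀ p ∈ L, ∀ i, 1 ≤ i → i < n →
      Equiv.swap p.1 p.2 ≠ Equiv.swap i (i + 1))
    (hk : L.length = k)
    (hundo : (L.map fun p => Equiv.swap p.1 p.2).prod *
      ((List.range (n - 1)).map fun i => Equiv.swap (i + 1) (i + 2)).prod = 1) :
    n + 1 ≤ k := by
  classical
  subst hk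
  set V : Finset ℕ := Finset.Icc 1 n with hVdef
  set Pp : Equiv.Perm ℕ := ((List.range (n - 1)).map fun i => Equiv.swap (i + 1) (i + 2)).prod
    with hPpdef
  have hPv : ∀ x, Pp x = if x = n then 1 else if 1 ≤ x ∧ x ≤ n - 1 then x + 1 else x := by
    intro x
    have h := qval (n - 1) x
    have hn1 : n - 1 + 1 = n := by omega
    rw [hPpdef, h, hn1]
  have hσ : (L.map fun p => Equiv.swap p.1 p.2).prod = Pp⁻¹ :=
    eq_inv_of_mul_eq_one_left hundo
  -- suffix products
  set W : ℕ → Equiv.Perm ℕ := fun j => ((L.drop j).map fun p => Equiv.swap p.1 p.2).prod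
    with hWdef
  have hW0 : W 0 = Pp⁻¹ := by rw [hWdef]; simpa using hσ
  have hWm : W L.length = 1 := by
    rw [hWdef]; simp
  have hWstep : ∀ (j : ℕ) (hj : j < L.length),
      W j = Equiv.swap (L[j]'hj).1 (L[j]'hj).2 * W (j + 1) := by
    intro j hj
    simp only [hWdef]
    rw [List.drop_eq_getElem_cons hj, List.map_cons, List.prod_cons]
  have hσv : ∀ v, 2 ≤ v → v ≤ n → W 0 v = v - 1 := by
    intro v h2 hvn
    have hval : Pp (v - 1) = v := by rw [hPv]; split_ifs <;> omega
    rw [hW0]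
    exact Equiv.Perm.inv_eq_iff_eq.mpr hval.symm
  have hσ1 : W 0 1 = n := by
    have hval : Pp n = 1 := by rw [hPv]; simp
    rw [hW0, ← hval, perm_inv_apply_self]
  have hent : ∀ p ∈ L, p.1 ∈ V ∧ p.2 ∈ V := fun p hp => ⟨(hL p hp).2.1, (hL p hp).2.2⟩
  have hWmem : ∀ j x, (W j x ∈ V ↔ x ∈ V) := by
    intro j x
    simp only [hWdef]
    exact prodMem V _ (fun p hp => hent p (List.drop_subset _ _ hp)) x
  have chain : ∀ (v a b : ℕ), a ≤ b → (∀ i, a ≤ i → i < b → W i v = W (i + 1) v) →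
      W a v = W b v := by
    intro v a b hab h
    induction b, hab using Nat.le_induction with
    | base => rfl
    | succ b hab ih =>
      rw [ih (fun i hi hib => h i hi (by omega)), h b hab (by omega)]
  set Dv : ℕ → Finset ℕ :=
    fun v => (Finset.range L.length).filter (fun j => W j v ≠ W (j + 1) v) with hDvdef
  -- every point moves at least once
  have hd1 : ∀ v ∈ V, (Dv v).Nonempty := by
    intro v hv
    by_contra hne
    rw [Finset.not_nonempty_iff_eq_empty] at hne
    have hchain : W 0 v = W L.length v := by
      refine chain v 0 L.length (Nat.zero_le _) (fun i _ hi => ?_)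
      by_contra hcon
      have hmem : i ∈ Dv v := Finset.mem_filter.mpr ⟨Finset.mem_range.mpr hi, hcon⟩
      rw [hne] at hmem
      exact absurd hmem (Finset.notMem_empty i)
    rw [hWm] at hchain
    simp only [Equiv.Perm.one_apply] at hchain
    rcases Finset.mem_Icc.mp hv with ⟨h1, h2⟩
    by_cases hv1 : v = 1
    · rw [hv1, hσ1] at hchain; omega
    · rw [hσv v (by omega) h2] at hchain; omega
  -- double counting
  have hsum : ∑ v ∈ V, (Dv v).card = 2 * L.length := by
    have step1 : ∀ v, (Dv v).card
        = ∑ j ∈ Finset.range L.length, (if W j v ≠ W (j + 1) v then 1 else 0) := by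
      intro v
      rw [hDvdef]
      exact Finset.card_filter _ _
    rw [Finset.sum_congr rfl (fun v _ => step1 v), Finset.sum_comm]
    have step2 : ∀ j ∈ Finset.range L.length,
        (∑ v ∈ V, if W j v ≠ W (j + 1) v then 1 else 0) = 2 := by
      intro j hj
      have hjm := Finset.mem_range.mp hj
      rw [← Finset.card_filter]
      have hp12 : (L[j]'hjm).1 ≠ (L[j]'hjm).2 := (hL _ (List.getElem_mem hjm)).1
      have hcond : ∀ v ∈ V, ((W j v ≠ W (j + 1) v)
          ↔ (W (j + 1) v = (L[j]'hjm).1 ∨ W (j + 1) v = (L[j]'hjm).2)) := by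
        intro v _
        rw [hWstep j hjm]
        simp only [Equiv.Perm.mul_apply]
        rw [Equiv.swap_apply_ne_self_iff, and_iff_right hp12]
      rw [Finset.filter_congr hcond]
      have hpair : V.filter
          (fun v => W (j + 1) v = (L[j]'hjm).1 ∨ W (j + 1) v = (L[j]'hjm).2)
          = {(W (j + 1))⁻¹ (L[j]'hjm).1, (W (j + 1))⁻¹ (L[j]'hjm).2} := by
        ext v
        simp only [Finset.mem_filter, Finset.mem_insert, Finset.mem_singleton]
        constructor
        · rintro ⟨hvV, h | h⟩
          · left; rw [← h, perm_inv_apply_self]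
          · right; rw [← h, perm_inv_apply_self]
        · rintro (rfl | rfl)
          · refine ⟨?_, Or.inl (perm_apply_inv_self _ _)⟩
            rw [← hWmem (j + 1), perm_apply_inv_self]
            exact (hent _ (List.getElem_mem hjm)).1
          · refine ⟨?_, Or.inr (perm_apply_inv_self _ _)⟩
            rw [← hWmem (j + 1), perm_apply_inv_self]
            exact (hent _ (List.getElem_mem hjm)).2
      rw [hpair]
      exact Finset.card_pair (fun h => hp12 ((W (j + 1))⁻¹.injective h))
    rw [Finset.sum_congr rfl step2, Finset.sum_const, Finset.card_range, smul_eq_mul, mul_comm]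
  -- the set where d v = 1
  set S1 : Finset ℕ := V.filter (fun v => (Dv v).card = 1) with hS1def
  have hVcard : V.card = n := by rw [hVdef, Nat.card_Icc]; omega
  have hlow : 2 * n ≤ 2 * L.length + S1.card := by
    have hub : ∑ v ∈ V, (if (Dv v).card = 1 then 1 else 2) ≤ ∑ v ∈ V, (Dv v).card := by
      refine Finset.sum_le_sum (fun v hv => ?_)
      have hpos := Finset.card_pos.mpr (hd1 v hv)
      split_ifs with h <;> omega
    have hS1eq : S1.card = ∑ v ∈ V, (if (Dv v).card = 1 then 1 else 0) := by
      rw [hS1def]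
      exact Finset.card_filter _ _
    have key2 : (∑ v ∈ V, (if (Dv v).card = 1 then 1 else 2))
        + (∑ v ∈ V, (if (Dv v).card = 1 then 1 else 0)) = 2 * n := by
      rw [← Finset.sum_add_distrib]
      have hterm : ∀ v ∈ V,
          ((if (Dv v).card = 1 then 1 else 2) + (if (Dv v).card = 1 then 1 else 0)) = 2 := by
        intro v _
        split_ifs <;> rfl
      rw [Finset.sum_congr rfl hterm, Finset.sum_const, hVcard, smul_eq_mul, mul_comm]
    rw [hsum] at hub
    omega
  -- d v = 1 forces an adjacent transposition
  have key : ∀ v ∈ S1, v = 1 := by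
    intro v hvS
    by_contra hv1
    obtain ⟨hvV, hcard⟩ := Finset.mem_filter.mp hvS
    obtain ⟨j, hj⟩ := Finset.card_eq_one.mp hcard
    have hjm : j < L.length := by
      have hmem : j ∈ Dv v := by rw [hj]; exact Finset.mem_singleton_self j
      exact Finset.mem_range.mp (Finset.mem_filter.mp hmem).1
    have huniq : ∀ i, i < L.length → i ≠ j → W i v = W (i + 1) v := by
      intro i him hij
      by_contra hcon
      have hmem : i ∈ Dv v := Finset.mem_filter.mpr ⟨Finset.mem_range.mpr him, hcon⟩
      rw [hj, Finset.mem_singleton] at hmem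
      exact hij hmem
    have h1 : W (j + 1) v = v := by
      have h := chain v (j + 1) L.length (by omega) (fun i hi him => huniq i him (by omega))
      rw [hWm] at h
      simpa using h
    have h2 : W 0 v = W j v := chain v 0 j (Nat.zero_le _)
      (fun i _ hij => huniq i (by omega) (by omega))
    rcases Finset.mem_Icc.mp hvV with ⟨hge, hle⟩
    have hv2 : 2 ≤ v := by omega
    have hswv : Equiv.swap (L[j]'hjm).1 (L[j]'hjm).2 v = v - 1 := by
      have hstep := hWstep j hjm
      have : W j v = Equiv.swap (L[j]'hjm).1 (L[j]'hjm).2 (W (j + 1) v) := by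
        rw [hstep]; rfl
      rw [h1] at this
      rw [← this, ← h2, hσv v hv2 hle]
    have hp12 : (L[j]'hjm).1 ≠ (L[j]'hjm).2 := (hL _ (List.getElem_mem hjm)).1
    have hpv : Equiv.swap (L[j]'hjm).1 (L[j]'hjm).2 = Equiv.swap (v - 1) ((v - 1) + 1) := by
      have hvv : (v - 1) + 1 = v := by omega
      rw [hvv]
      rw [Equiv.swap_apply_def] at hswv
      split_ifs at hswv with ha hb
      · rw [← ha, ← hswv, Equiv.swap_comm]
      · rw [← hb, ← hswv]
      · omega
    exact havoid _ (List.getElem_mem hjm) (v - 1) (by omega) (by omega) hpv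
  have hS1card : S1.card ≤ 1 := by
    have hsub : S1 ⊆ {1} := fun v hv => Finset.mem_singleton.mpr (key v hv)
    simpa using Finset.card_le_card hsub
  have hnk : n ≤ L.length := by omega
  -- parity
  have hEven : Even (L.length + (n - 1)) := by
    have hinj := Equiv.Perm.viaEmbeddingHom_injective (Fin.valEmbedding (n := n + 1))
    have hφL : Equiv.Perm.viaEmbeddingHom Fin.valEmbedding
        ((L.map fun p => Equiv.swap ((p.1 : Fin (n + 1))) ((p.2 : Fin (n + 1)))).prod)
        = (L.map fun p => Equiv.swap p.1 p.2).prod := by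
      rw [map_list_prod, List.map_map]
      congr 1
      refine List.map_congr_left (fun p hp => ?_)
      have hb1 := Finset.mem_Icc.mp (hL p hp).2.1
      have hb2 := Finset.mem_Icc.mp (hL p hp).2.2
      show Equiv.Perm.viaEmbeddingHom Fin.valEmbedding (Equiv.swap _ _) = _
      rw [via_swap, Fin.val_cast_of_lt (by omega), Fin.val_cast_of_lt (by omega)]
    have hφP : Equiv.Perm.viaEmbeddingHom Fin.valEmbedding
        (((List.range (n - 1)).map fun i =>
          Equiv.swap ((i + 1 : ℕ) : Fin (n + 1)) ((i + 2 : ℕ) : Fin (n + 1))).prod)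
        = Pp := by
      rw [map_list_prod, List.map_map, hPpdef]
      congr 1
      refine List.map_congr_left (fun i hi => ?_)
      have hilt := List.mem_range.mp hi
      show Equiv.Perm.viaEmbeddingHom Fin.valEmbedding (Equiv.swap _ _) = _
      rw [via_swap, Fin.val_cast_of_lt (by omega), Fin.val_cast_of_lt (by omega)]
    have hone : (L.map fun p => Equiv.swap ((p.1 : Fin (n + 1))) ((p.2 : Fin (n + 1)))).prod *
        ((List.range (n - 1)).map fun i =>
          Equiv.swap ((i + 1 : ℕ) : Fin (n + 1)) ((i + 2 : ℕ) : Fin (n + 1))).prod = 1 := by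
      apply hinj
      rw [map_mul, hφL, hφP, map_one]
      exact hundo
    have s1 : Equiv.Perm.sign
        ((L.map fun p => Equiv.swap ((p.1 : Fin (n + 1))) ((p.2 : Fin (n + 1)))).prod)
        = (-1) ^ L.length := by
      rw [Equiv.Perm.sign_prod_list_swap, List.length_map]
      intro g hg
      rw [List.mem_map] at hg
      obtain ⟨p, hp, rfl⟩ := hg
      have hb1 := Finset.mem_Icc.mp (hL p hp).2.1
      have hb2 := Finset.mem_Icc.mp (hL p hp).2.2
      refine ⟨_, _, ?_, rfl⟩
      intro h
      apply (hL p hp).1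
      have := congrArg Fin.val h
      rwa [Fin.val_cast_of_lt (by omega), Fin.val_cast_of_lt (by omega)] at this
    have s2 : Equiv.Perm.sign
        (((List.range (n - 1)).map fun i =>
          Equiv.swap ((i + 1 : ℕ) : Fin (n + 1)) ((i + 2 : ℕ) : Fin (n + 1))).prod)
        = (-1) ^ (n - 1) := by
      rw [Equiv.Perm.sign_prod_list_swap, List.length_map, List.length_range]
      intro g hg
      rw [List.mem_map] at hg
      obtain ⟨i, hi, rfl⟩ := hg
      have hilt := List.mem_range.mp hi
      refine ⟨_, _, ?_, rfl⟩
      intro h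
      have := congrArg Fin.val h
      rw [Fin.val_cast_of_lt (by omega), Fin.val_cast_of_lt (by omega)] at this
      omega
    have hsigns : ((-1 : ℤˣ)) ^ (L.length + (n - 1)) = 1 := by
      rw [pow_add, ← s1, ← s2, ← map_mul, hone, map_one]
    refine (neg_one_pow_eq_one_iff_even ?_).mp hsigns
    intro h
    have := congrArg Units.val h
    norm_num at this
  have hEv := Nat.even_iff.mp hEven
  omega
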